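/- Let A ⊆ ℝⁿ with 0 ∈ closure(A \ {0}), and d > 1, C > 0. For any sequence b_m ∈ ST_d(A;C) with b_m → 0 and b_m ≠ 0, there exists a sequence a_m ∈ A such that for every d₁ with 1 ≤ d₁ < d, ‖a_m − b_m‖ / ‖a_m‖^{d₁} → 0 as m → ∞. -/

import Mathlib

open Filter Metric Topology MeasureTheory

noncomputable section

abbrev E (n : ℕ) := EuclideanSpace ℝ (Fin n)

/-- Direction set of `A` at the origin. -/
def Dir (n : ℕ) (A : Set (E n)) : Set (E n) :=
  {a | ‖a‖ = 1 ∧ ∃ x : ℕ → E n, (∀ i, x i ∈ A \ {0}) ∧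
    Tendsto x atTop (nhds (0 : E n)) ∧
    Tendsto (fun i => (‖x i‖)⁻¹ • x i) atTop (nhds a)}

/-- Sea-tangle neighbourhood of degree `d` and width `C`. -/
def STg (n : ℕ) (d C : ℝ) (A : Set (E n)) : Set (E n) :=
  {x | Metric.infDist x A ≤ C * ‖x‖ ^ d}

/-- Cone over the direction set (real tangent cone). -/
def LD (n : ℕ) (A : Set (E n)) : Set (E n) :=
  {x | ∃ a ∈ Dir n A, ∃ t : ℝ, 0 ≤ t ∧ x = t • a}

/-- Sequence selection property. -/
def SSP (n : ℕ) (S : Set (E n)) : Prop :=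
  ∀ a : ℕ → E n, (∀ m, a m ≠ 0) → Tendsto a atTop (nhds (0 : E n)) →
    (∃ L ∈ Dir n S, Tendsto (fun m => (‖a m‖)⁻¹ • a m) atTop (nhds L)) →
    ∀ ε > (0:ℝ), ∃ b : ℕ → E n, (∀ m, b m ∈ S) ∧
      ∀ᶠ m in atTop, ‖a m - b m‖ ≤ ε * min ‖a m‖ ‖b m‖

/-- ST-equivalence of set-germs at the origin. -/
def STEquiv (n : ℕ) (A B : Set (E n)) : Prop :=
  ∃ d₁ > (1:ℝ), ∃ C₁ > (0:ℝ), ∃ d₂ > (1:ℝ), ∃ C₂ > (0:ℝ), ∃ ε > (0:ℝ),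
    B ∩ ball (0 : E n) ε ⊆ STg n d₁ C₁ A ∧ A ∩ ball (0 : E n) ε ⊆ STg n d₂ C₂ B

theorem stmt12 (n : ℕ) (A : Set (E n)) (hA : (0 : E n) ∈ closure (A \ {0}))
    (d C : ℝ) (hd : 1 < d) (hC : 0 < C)
    (b : ℕ → E n) (hb : ∀ m, b m ∈ STg n d C A) (hb0 : ∀ m, b m ≠ 0)
    (hbt : Tendsto b atTop (nhds (0 : E n))) :
    ∃ a : ℕ → E n, (∀ m, a m ∈ A) ∧ ∀ d₁ : ℝ, 1 ≤ d₁ → d₁ < d →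
      Tendsto (fun m => ‖a m - b m‖ / ‖a m‖ ^ d₁) atTop (nhds (0:ℝ)) := by
  have hAne : A.Nonempty := by
    rcases mem_closure_iff_seq_limit.1 hA with ⟨x, hx, -⟩
    exact ⟨x 0, (hx 0).1⟩
  have key : ∀ m, ∃ a ∈ A, dist (b m) a < (C + 1) * ‖b m‖ ^ d := by
    intro m
    have hpos : (0:ℝ) < ‖b m‖ ^ d :=
      Real.rpow_pos_of_pos (norm_pos_iff.2 (hb0 m)) d
    have h1 : Metric.infDist (b m) A < (C + 1) * ‖b m‖ ^ d := by
      refine lt_of_le_of_lt (hb m) ?_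
      nlinarith
    exact (Metric.infDist_lt_iff hAne).1 h1
  choose a ha hdist using key
  refine ⟨a, ha, ?_⟩
  intro d₁ hd1 hd1d
  have hnb : Tendsto (fun m => ‖b m‖) atTop (nhds 0) := by
    simpa using hbt.norm
  have hrp : ∀ e : ℝ, 0 < e → Tendsto (fun m => ‖b m‖ ^ e) atTop (nhds 0) := by
    intro e he
    have hc := (Real.continuousAt_rpow_const 0 e (Or.inr he.le)).tendsto.comp hnb
    simpa [Function.comp_def, Real.zero_rpow (ne_of_gt he)] using hc
  have hsmall : ∀ᶠ m in atTop, (C + 1) * ‖b m‖ ^ (d - 1) ≤ 1/2 := by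
    have h0 : Tendsto (fun m => (C + 1) * ‖b m‖ ^ (d - 1)) atTop (nhds 0) := by
      simpa using (hrp (d - 1) (by linarith)).const_mul (C + 1)
    exact (h0.eventually_lt_const (by norm_num)).mono fun m hm => le_of_lt hm
  have hbound : ∀ᶠ m in atTop,
      ‖a m - b m‖ / ‖a m‖ ^ d₁ ≤ (C + 1) * 2 ^ d₁ * ‖b m‖ ^ (d - d₁) := by
    filter_upwards [hsmall] with m hm
    have hnbpos : (0:ℝ) < ‖b m‖ := norm_pos_iff.2 (hb0 m)
    have hab : ‖a m - b m‖ ≤ (C + 1) * ‖b m‖ ^ d := by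
      have := le_of_lt (hdist m)
      rwa [dist_eq_norm, norm_sub_rev] at this
    have hsplit : ‖b m‖ ^ d = ‖b m‖ * ‖b m‖ ^ (d - 1) := by
      rw [show d = 1 + (d - 1) by ring, Real.rpow_add hnbpos, Real.rpow_one]
      ring_nf
    have habs : ‖a m - b m‖ ≤ ‖b m‖ / 2 := by
      calc ‖a m - b m‖ ≤ (C + 1) * ‖b m‖ ^ d := hab
        _ = ((C + 1) * ‖b m‖ ^ (d - 1)) * ‖b m‖ := by rw [hsplit]; ring
        _ ≤ (1/2) * ‖b m‖ := mul_le_mul_of_nonneg_right hm hnbpos.le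
        _ = ‖b m‖ / 2 := by ring
    have ham : ‖b m‖ / 2 ≤ ‖a m‖ := by
      have h2 := abs_norm_sub_norm_le (a m) (b m)
      have h3 := abs_le.1 h2
      linarith [h3.1]
    have hdpos : (0:ℝ) < (‖b m‖ / 2) ^ d₁ := Real.rpow_pos_of_pos (by linarith) d₁
    have hden : (‖b m‖ / 2) ^ d₁ ≤ ‖a m‖ ^ d₁ :=
      Real.rpow_le_rpow (by linarith) ham (by linarith)
    have hRHSnn : (0:ℝ) ≤ (C + 1) * ‖b m‖ ^ d := by positivity
    have h2p : (0:ℝ) < (2:ℝ) ^ d₁ := Real.rpow_pos_of_pos two_pos d₁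
    have hbd1 : (0:ℝ) < ‖b m‖ ^ d₁ := Real.rpow_pos_of_pos hnbpos d₁
    calc ‖a m - b m‖ / ‖a m‖ ^ d₁ ≤ ((C + 1) * ‖b m‖ ^ d) / ((‖b m‖ / 2) ^ d₁) :=
        div_le_div₀ hRHSnn hab hdpos hden
      _ = (C + 1) * 2 ^ d₁ * ‖b m‖ ^ (d - d₁) := by
        rw [Real.div_rpow hnbpos.le (by norm_num : (0:ℝ) ≤ 2), Real.rpow_sub hnbpos]
        field_simp
  have hnn : ∀ m, 0 ≤ ‖a m - b m‖ / ‖a m‖ ^ d₁ := fun m =>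
    div_nonneg (norm_nonneg _) (Real.rpow_nonneg (norm_nonneg _) _)
  have hlim : Tendsto (fun m => (C + 1) * 2 ^ d₁ * ‖b m‖ ^ (d - d₁)) atTop (nhds 0) := by
    simpa using (hrp (d - d₁) (by linarith)).const_mul ((C + 1) * 2 ^ d₁)
  exact squeeze_zero' (Eventually.of_forall hnn) hbound hlim
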